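/- Let X be a countable set, m : X → ℝ with m(x) > 0 for all x, and b : X × X → ℝ a symmetric weighted graph, i.e. b(x,y) ≥ 0, b(x,x) = 0, b(x,y) = b(y,x), and Σ_y b(x,y) < ∞ for every x. Let W : X → ℝ be bounded with ‖W‖_∞ := sup_x |W(x)|, let λ ∈ ℝ, and let u : X → ℝ with |u| ≤ 1 satisfy, for every finitely supported v : X → ℝ, Σ_{x,y} b(x,y)(u(x) − u(y))(v(x) − v(y)) + Σ_x W(x)u(x)v(x)m(x) = λ Σ_x u(x)v(x)m(x). Then for every finitely supported v : X → ℝ with Σ_{x,y} b(x,y)(v(x) − v(y))² + Σ_x W(x)v(x)²m(x) + (1 + ‖W‖_∞) Σ_x v(x)²m(x) ≤ 1, one has Σ_{x,y ∈ X} v(x)² b(x,y)(u(x) − u(y))² ≤ (1 + √(1 + |λ| + ‖W‖_∞))². -/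

import Mathlib

lemma tsum_swap {X Y : Type*} {f : X → Y → ℝ} (h : Summable (Function.uncurry f)) :
    ∑' x, ∑' y, f x y = ∑' y, ∑' x, f x y := by
  have h2 : Summable (fun p : Y × X => f p.2 p.1) := by
    have := h.comp_injective (Equiv.prodComm Y X).injective
    exact this
  calc ∑' x, ∑' y, f x y = ∑' p : X × Y, f p.1 p.2 := (Summable.tsum_prod' h (fun x => h.prod_factor x)).symm
    _ = ∑' p : Y × X, f p.2 p.1 := ((Equiv.prodComm Y X).tsum_eq _).symm
    _ = ∑' y, ∑' x, f x y := Summable.tsum_prod' h2 (fun y => h2.prod_factor y)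

lemma amgm (δ s du vx vy : ℝ) (hδ : 0 < δ) (hs : 0 < s) (hδs : 2*δ*s = 1) :
    |du * (vx^2 - vy^2)| ≤ δ * (du^2 * vx^2) + δ * (du^2 * vy^2) + s * (vx - vy)^2 := by
  rcases abs_cases (du * (vx^2 - vy^2)) with ⟨h, _⟩ | ⟨h, _⟩ <;> rw [h] <;>
  nlinarith [mul_nonneg hs.le (sq_nonneg (δ*(du*(vx+vy)) - (vx-vy))),
    mul_nonneg hs.le (sq_nonneg (δ*(du*(vx+vy)) + (vx-vy))),
    mul_nonneg hδ.le (sq_nonneg (du*(vx-vy))), sq_nonneg du, sq_nonneg (vx-vy)]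


lemma caccio_final_algebra (T a N s delta Q : ℝ) (hT0 : 0 ≤ T) (ha0 : 0 ≤ a)
    (hN0 : 0 ≤ N) (hN1 : N ≤ 1) (hQ0 : 0 ≤ Q) (hQ1 : Q ≤ 1) (hs2 : 2 ≤ s)
    (hsq : (s - 1) ^ 2 = 1 + a) (hds : 2 * delta * s = 1)
    (hmain : T ≤ a * N + (delta * T + (delta * T + s * Q))) : T ≤ s ^ 2 := by
  have hs0 : (0:ℝ) < s := by linarith
  have hds2 : delta * s = 1 / 2 := by linear_combination hds / 2
  have hstep : T * s ≤ (a * N + (delta * T + (delta * T + s * Q))) * s :=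
    mul_le_mul_of_nonneg_right hmain hs0.le
  have hstep2 : T * s ≤ a * N * s + T + s ^ 2 * Q := by
    have hexp : (a * N + (delta * T + (delta * T + s * Q))) * s
        = a * N * s + 2 * (delta * s) * T + s ^ 2 * Q := by ring
    rw [hexp, hds2] at hstep
    linarith
  have haN : a * N ≤ a := by nlinarith
  have haNs : a * N * s ≤ a * s := mul_le_mul_of_nonneg_right haN hs0.le
  have hsQ : s ^ 2 * Q ≤ s ^ 2 := by nlinarith [sq_nonneg s]
  have ha_eq : a = s ^ 2 - 2 * s := by linear_combination -hsq
  have hfin : T * (s - 1) ≤ s ^ 2 * (s - 1) := by nlinarith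
  have hs1' : (0:ℝ) < s - 1 := by linarith
  nlinarith [hfin, hs1']

set_option maxHeartbeats 1000000 in
theorem discrete_caccioppoli {X : Type*} [Countable X]
    (m : X → ℝ) (hm : ∀ x, 0 < m x)
    (b : X → X → ℝ) (hb_nonneg : ∀ x y, 0 ≤ b x y) (hb_diag : ∀ x, b x x = 0)
    (hb_symm : ∀ x y, b x y = b y x) (hb_sum : ∀ x, Summable fun y => b x y)
    (W : X → ℝ) (hWbd : BddAbove (Set.range fun x => |W x|))
    (M : ℝ) (hM : M = ⨆ x, |W x|)
    (lam : ℝ) (u : X → ℝ) (hub : ∀ x, |u x| ≤ 1)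
    (heig : ∀ v : X → ℝ, (Function.support v).Finite →
      (∑' x, ∑' y, b x y * (u x - u y) * (v x - v y)) + (∑' x, W x * u x * v x * m x)
        = lam * ∑' x, u x * v x * m x) :
    ∀ v : X → ℝ, (Function.support v).Finite →
      (∑' x, ∑' y, b x y * (v x - v y) ^ 2) + (∑' x, W x * v x ^ 2 * m x)
        + (1 + M) * (∑' x, v x ^ 2 * m x) ≤ 1 →
      (∑' x, ∑' y, v x ^ 2 * b x y * (u x - u y) ^ 2)
        ≤ (1 + Real.sqrt (1 + |lam| + M)) ^ 2 := by
  intro v hv hcon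
  rcases isEmpty_or_nonempty X with hX | hX
  · have : (∑' x : X, ∑' y, v x ^ 2 * b x y * (u x - u y) ^ 2) = 0 := tsum_empty
    rw [this]
    positivity
  -- basic constants
  have hW : ∀ x, |W x| ≤ M := fun x => hM ▸ le_ciSup hWbd x
  have hM0 : 0 ≤ M := le_trans (abs_nonneg _) (hW (Classical.arbitrary X))
  set a : ℝ := |lam| + M with ha
  have ha0 : 0 ≤ a := add_nonneg (abs_nonneg _) hM0
  have hgoal_eq : 1 + |lam| + M = 1 + a := by rw [ha]; ring
  rw [hgoal_eq]
  set s : ℝ := 1 + Real.sqrt (1 + a) with hs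
  have hsqrt1 : 1 ≤ Real.sqrt (1 + a) := by
    have h1 : Real.sqrt 1 ≤ Real.sqrt (1 + a) := Real.sqrt_le_sqrt (by linarith)
    rwa [Real.sqrt_one] at h1
  have hs2 : 2 ≤ s := by rw [hs]; linarith
  have hs0 : 0 < s := by linarith
  have hsq : (s - 1) ^ 2 = 1 + a := by
    rw [hs]; simp only [add_sub_cancel_left]
    exact Real.sq_sqrt (by linarith)
  set δ : ℝ := 1 / (2 * s) with hδdef
  have hδ0 : 0 < δ := by rw [hδdef]; positivity
  have hδs : 2 * δ * s = 1 := by rw [hδdef]; field_simp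
  -- support finset
  set F : Finset X := hv.toFinset with hF
  have hvF : ∀ x, x ∉ F → v x = 0 := by
    intro x hx
    by_contra h
    exact hx (hv.mem_toFinset.mpr h)
  set Vsq : ℝ := ∑ y ∈ F, v y ^ 2 with hVsq
  have hvsq : ∀ x, v x ^ 2 ≤ Vsq := by
    intro x
    by_cases hx : x ∈ F
    · exact Finset.single_le_sum (fun i _ => sq_nonneg (v i)) hx
    · rw [hvF x hx]
      simp only [ne_eq, OfNat.ofNat_ne_zero, not_false_eq_true, zero_pow]
      exact Finset.sum_nonneg fun i _ => sq_nonneg (v i)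
  have hVsq0 : 0 ≤ Vsq := Finset.sum_nonneg (fun i _ => sq_nonneg (v i))
  have hu2 : ∀ x, u x ^ 2 ≤ 1 := by
    intro x; have h := abs_le.mp (hub x); nlinarith [h.1, h.2]
  have hdu : ∀ x y, (u x - u y) ^ 2 ≤ 4 := by
    intro x y
    have h1 := abs_le.mp (hub x); have h2 := abs_le.mp (hub y)
    nlinarith [h1.1, h1.2, h2.1, h2.2]
  have hb_sum' : ∀ y, Summable fun x => b x y :=
    fun y => (hb_sum y).congr (fun x => hb_symm y x)
  -- bounding function G
  have hbvy_sum : ∀ x, Summable (fun y => b x y * v y ^ 2) := by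
    intro x
    refine Summable.of_nonneg_of_le (fun y => mul_nonneg (hb_nonneg x y) (sq_nonneg _))
      (fun y => ?_) ((hb_sum x).mul_left Vsq)
    calc b x y * v y ^ 2 ≤ b x y * Vsq :=
          mul_le_mul_of_nonneg_left (hvsq y) (hb_nonneg x y)
      _ = Vsq * b x y := by ring
  have hbvy_eq : ∀ x, (∑' y, b x y * v y ^ 2) = ∑ y ∈ F, b x y * v y ^ 2 := by
    intro x
    exact tsum_eq_sum (fun y hy => by rw [hvF y hy]; ring)
  set G : X → ℝ := fun x => (∑' y, b x y) * v x ^ 2 + ∑ y ∈ F, b x y * v y ^ 2 with hG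
  have hBx0 : ∀ x, 0 ≤ ∑' y, b x y := fun x => tsum_nonneg (fun y => hb_nonneg x y)
  have hG0 : ∀ x, 0 ≤ G x := by
    intro x
    exact add_nonneg (mul_nonneg (hBx0 x) (sq_nonneg _))
      (Finset.sum_nonneg fun y _ => mul_nonneg (hb_nonneg x y) (sq_nonneg _))
  have hG_sum : Summable G := by
    refine Summable.add (summable_of_ne_finset_zero (s := F) (fun x hx => by rw [hvF x hx]; ring)) ?_
    exact summable_sum (fun y _ => (hb_sum' y).mul_right (v y ^ 2))
  -- inner summabilities
  have S1 : ∀ x, Summable (fun y => v x ^ 2 * b x y * (u x - u y) ^ 2) := by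
    intro x
    refine Summable.of_nonneg_of_le
      (fun y => mul_nonneg (mul_nonneg (sq_nonneg _) (hb_nonneg x y)) (sq_nonneg _))
      (fun y => ?_) ((hb_sum x).mul_left (4 * v x ^ 2))
    calc v x ^ 2 * b x y * (u x - u y) ^ 2 ≤ v x ^ 2 * b x y * 4 :=
          mul_le_mul_of_nonneg_left (hdu x y) (mul_nonneg (sq_nonneg _) (hb_nonneg x y))
      _ = 4 * v x ^ 2 * b x y := by ring
  have Sh2 : ∀ x, Summable (fun y => v y ^ 2 * b x y * (u x - u y) ^ 2) := by
    intro x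
    refine Summable.of_nonneg_of_le
      (fun y => mul_nonneg (mul_nonneg (sq_nonneg _) (hb_nonneg x y)) (sq_nonneg _))
      (fun y => ?_) ((hb_sum x).mul_left (4 * Vsq))
    calc v y ^ 2 * b x y * (u x - u y) ^ 2 ≤ Vsq * b x y * 4 := by
          apply mul_le_mul (mul_le_mul (hvsq y) le_rfl (hb_nonneg x y) hVsq0)
            (hdu x y) (sq_nonneg _) (mul_nonneg hVsq0 (hb_nonneg x y))
      _ = 4 * Vsq * b x y := by ring
  have Sq : ∀ x, Summable (fun y => b x y * (v x - v y) ^ 2) := by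
    intro x
    refine Summable.of_nonneg_of_le
      (fun y => mul_nonneg (hb_nonneg x y) (sq_nonneg _))
      (fun y => ?_) ((hb_sum x).mul_left (2 * (v x ^ 2 + Vsq)))
    calc b x y * (v x - v y) ^ 2 ≤ b x y * (2 * (v x ^ 2 + Vsq)) := by
          apply mul_le_mul_of_nonneg_left _ (hb_nonneg x y)
          nlinarith [hvsq y, sq_nonneg (v x + v y)]
      _ = 2 * (v x ^ 2 + Vsq) * b x y := by ring
  have ht2abs : ∀ x y, |b x y * u y * (u x - u y) * (v x ^ 2 - v y ^ 2)|
      ≤ b x y * (2 * (v x ^ 2 + v y ^ 2)) := by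
    intro x y
    have h1 : |b x y * u y * (u x - u y) * (v x ^ 2 - v y ^ 2)|
        = b x y * |u y| * |u x - u y| * |v x ^ 2 - v y ^ 2| := by
      rw [abs_mul, abs_mul, abs_mul, abs_of_nonneg (hb_nonneg x y)]
    rw [h1]
    have h2 : |u x - u y| ≤ 2 := by
      have hx := abs_le.mp (hub x); have hy := abs_le.mp (hub y)
      rw [abs_le]; constructor <;> linarith
    have h3 : |v x ^ 2 - v y ^ 2| ≤ v x ^ 2 + v y ^ 2 := by
      rw [abs_le]; constructor <;> nlinarith [sq_nonneg (v x), sq_nonneg (v y)]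
    calc b x y * |u y| * |u x - u y| * |v x ^ 2 - v y ^ 2|
        ≤ b x y * 1 * 2 * (v x ^ 2 + v y ^ 2) := by
          have hb1 : 0 ≤ b x y * 1 := by
            rw [mul_one]; exact hb_nonneg x y
          have hb2 : 0 ≤ b x y * 1 * 2 := by positivity
          apply mul_le_mul _ h3 (abs_nonneg _) hb2
          apply mul_le_mul _ h2 (abs_nonneg _) hb1
          exact mul_le_mul_of_nonneg_left (hub y) (hb_nonneg x y)
      _ = b x y * (2 * (v x ^ 2 + v y ^ 2)) := by ring
  have Sbvv : ∀ x, Summable (fun y => b x y * (2 * (v x ^ 2 + v y ^ 2))) := by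
    intro x
    refine Summable.of_nonneg_of_le
      (fun y => mul_nonneg (hb_nonneg x y) (by positivity)) (fun y => ?_)
      ((hb_sum x).mul_left (2 * (v x ^ 2 + Vsq)))
    calc b x y * (2 * (v x ^ 2 + v y ^ 2)) ≤ b x y * (2 * (v x ^ 2 + Vsq)) := by
          apply mul_le_mul_of_nonneg_left _ (hb_nonneg x y)
          nlinarith [hvsq y]
      _ = 2 * (v x ^ 2 + Vsq) * b x y := by ring
  have St2abs : ∀ x, Summable (fun y => |b x y * u y * (u x - u y) * (v x ^ 2 - v y ^ 2)|) :=
    fun x => Summable.of_nonneg_of_le (fun y => abs_nonneg _) (fun y => ht2abs x y) (Sbvv x)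
  have St2 : ∀ x, Summable (fun y => b x y * u y * (u x - u y) * (v x ^ 2 - v y ^ 2)) :=
    fun x => (St2abs x).of_abs
  -- inner bound: ∑' y |t2| ≤ 2 * G x
  have hinner_t2 : ∀ x, (∑' y, |b x y * u y * (u x - u y) * (v x ^ 2 - v y ^ 2)|) ≤ 2 * G x := by
    intro x
    calc (∑' y, |b x y * u y * (u x - u y) * (v x ^ 2 - v y ^ 2)|)
        ≤ ∑' y, b x y * (2 * (v x ^ 2 + v y ^ 2)) :=
          Summable.tsum_le_tsum (fun y => ht2abs x y) (St2abs x) (Sbvv x)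
      _ = ∑' y, ((2 * v x ^ 2) * b x y + 2 * (b x y * v y ^ 2)) :=
          tsum_congr (fun y => by ring)
      _ = (2 * v x ^ 2) * (∑' y, b x y) + 2 * (∑' y, b x y * v y ^ 2) := by
          rw [Summable.tsum_add ((hb_sum x).mul_left _) ((hbvy_sum x).mul_left 2),
            tsum_mul_left, tsum_mul_left]
      _ = 2 * G x := by rw [hG, hbvy_eq x]; ring
  have hinner_q : ∀ x, (∑' y, b x y * (v x - v y) ^ 2) ≤ 2 * G x := by
    intro x
    calc (∑' y, b x y * (v x - v y) ^ 2)
        ≤ ∑' y, b x y * (2 * (v x ^ 2 + v y ^ 2)) := by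
          refine Summable.tsum_le_tsum (fun y => ?_) (Sq x) (Sbvv x)
          apply mul_le_mul_of_nonneg_left _ (hb_nonneg x y)
          nlinarith [sq_nonneg (v x + v y)]
      _ = ∑' y, ((2 * v x ^ 2) * b x y + 2 * (b x y * v y ^ 2)) :=
          tsum_congr (fun y => by ring)
      _ = (2 * v x ^ 2) * (∑' y, b x y) + 2 * (∑' y, b x y * v y ^ 2) := by
          rw [Summable.tsum_add ((hb_sum x).mul_left _) ((hbvy_sum x).mul_left 2),
            tsum_mul_left, tsum_mul_left]
      _ = 2 * G x := by rw [hG, hbvy_eq x]; ring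
  have hinner_h2 : ∀ x, (∑' y, v y ^ 2 * b x y * (u x - u y) ^ 2) ≤ 4 * (∑' y, b x y * v y ^ 2) := by
    intro x
    calc (∑' y, v y ^ 2 * b x y * (u x - u y) ^ 2)
        ≤ ∑' y, 4 * (b x y * v y ^ 2) := by
          refine Summable.tsum_le_tsum (fun y => ?_) (Sh2 x) ((hbvy_sum x).mul_left 4)
          calc v y ^ 2 * b x y * (u x - u y) ^ 2 ≤ v y ^ 2 * b x y * 4 :=
                mul_le_mul_of_nonneg_left (hdu x y) (mul_nonneg (sq_nonneg _) (hb_nonneg x y))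
            _ = 4 * (b x y * v y ^ 2) := by ring
      _ = 4 * (∑' y, b x y * v y ^ 2) := tsum_mul_left
  -- outer summabilities
  have O1 : Summable (fun x => ∑' y, v x ^ 2 * b x y * (u x - u y) ^ 2) := by
    refine summable_of_ne_finset_zero (s := F) (fun x hx => ?_)
    have h0 : ∀ y, v x ^ 2 * b x y * (u x - u y) ^ 2 = 0 := fun y => by rw [hvF x hx]; ring
    rw [tsum_congr h0, tsum_zero]
  have O2abs : Summable (fun x => ∑' y, |b x y * u y * (u x - u y) * (v x ^ 2 - v y ^ 2)|) := by
    refine Summable.of_nonneg_of_le (fun x => tsum_nonneg (fun y => abs_nonneg _))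
      (fun x => hinner_t2 x) (hG_sum.mul_left 2)
  have O2 : Summable (fun x => ∑' y, b x y * u y * (u x - u y) * (v x ^ 2 - v y ^ 2)) := by
    refine Summable.of_norm_bounded (hG_sum.mul_left 2) (fun x => ?_)
    calc ‖∑' y, b x y * u y * (u x - u y) * (v x ^ 2 - v y ^ 2)‖
        ≤ ∑' y, ‖b x y * u y * (u x - u y) * (v x ^ 2 - v y ^ 2)‖ :=
          norm_tsum_le_tsum_norm (by simp only [Real.norm_eq_abs]; exact St2abs x)
      _ = ∑' y, |b x y * u y * (u x - u y) * (v x ^ 2 - v y ^ 2)| := by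
          simp only [Real.norm_eq_abs]
      _ ≤ 2 * G x := hinner_t2 x
  have Oq : Summable (fun x => ∑' y, b x y * (v x - v y) ^ 2) := by
    refine Summable.of_nonneg_of_le
      (fun x => tsum_nonneg (fun y => mul_nonneg (hb_nonneg x y) (sq_nonneg _))) (fun x => hinner_q x) (hG_sum.mul_left 2)
  have Obvy : Summable (fun x => ∑' y, b x y * v y ^ 2) := by
    refine Summable.congr (f := fun x => ∑ y ∈ F, b x y * v y ^ 2) ?_
      (fun x => (hbvy_eq x).symm)
    exact summable_sum (fun y _ => (hb_sum' y).mul_right (v y ^ 2))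
  have Oh2 : Summable (fun x => ∑' y, v y ^ 2 * b x y * (u x - u y) ^ 2) := by
    refine Summable.of_nonneg_of_le
      (fun x => tsum_nonneg (fun y => mul_nonneg (mul_nonneg (sq_nonneg _) (hb_nonneg x y)) (sq_nonneg _))) (fun x => hinner_h2 x) (Obvy.mul_left 4)
  -- names for the main quantities
  set T : ℝ := ∑' x, ∑' y, v x ^ 2 * b x y * (u x - u y) ^ 2 with hT
  set Q : ℝ := ∑' x, ∑' y, b x y * (v x - v y) ^ 2 with hQdef
  set N : ℝ := ∑' x, v x ^ 2 * m x with hN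
  set BW : ℝ := ∑' x, W x * v x ^ 2 * m x with hBW
  have hT0 : 0 ≤ T := tsum_nonneg (fun x => tsum_nonneg (fun y => mul_nonneg (mul_nonneg (sq_nonneg _) (hb_nonneg x y)) (sq_nonneg _)))
  have hQ0 : 0 ≤ Q := tsum_nonneg (fun x => tsum_nonneg (fun y => mul_nonneg (hb_nonneg x y) (sq_nonneg _)))
  have hN_eq : N = ∑ x ∈ F, v x ^ 2 * m x :=
    tsum_eq_sum (fun x hx => by rw [hvF x hx]; ring)
  have hN0 : 0 ≤ N := by
    rw [hN_eq]
    exact Finset.sum_nonneg (fun x _ => mul_nonneg (sq_nonneg _) (hm x).le)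
  have hBW_eq : BW = ∑ x ∈ F, W x * v x ^ 2 * m x :=
    tsum_eq_sum (fun x hx => by rw [hvF x hx]; ring)
  have hBW_ge : -(M * N) ≤ BW := by
    have hkey : 0 ≤ BW + M * N := by
      rw [hBW_eq, hN_eq, Finset.mul_sum, ← Finset.sum_add_distrib]
      refine Finset.sum_nonneg (fun x _ => ?_)
      have h1 : -M ≤ W x := neg_le_of_abs_le (hW x)
      have h2 : 0 ≤ v x ^ 2 * m x := mul_nonneg (sq_nonneg _) (hm x).le
      nlinarith [mul_le_mul_of_nonneg_right h1 h2]
    linarith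
  have hQ1 : Q ≤ 1 := by nlinarith [hcon, hBW_ge, hN0, hM0]
  have hN1 : N ≤ 1 := by nlinarith [hcon, hBW_ge, hN0, hM0, hQ0]
  -- apply the eigenfunction identity to φ = v² u
  have hφ : (Function.support (fun z => v z ^ 2 * u z)).Finite := by
    refine hv.subset (fun z hz => ?_)
    simp only [Function.mem_support] at hz ⊢
    intro h0
    apply hz
    rw [h0]; ring
  have eq1 := heig (fun z => v z ^ 2 * u z) hφ
  set E : ℝ := ∑' x, ∑' y, b x y * u y * (u x - u y) * (v x ^ 2 - v y ^ 2) with hE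
  have hsplit_inner : ∀ x, (∑' y, b x y * (u x - u y) * (v x ^ 2 * u x - v y ^ 2 * u y))
      = (∑' y, v x ^ 2 * b x y * (u x - u y) ^ 2)
        + ∑' y, b x y * u y * (u x - u y) * (v x ^ 2 - v y ^ 2) := by
    intro x
    rw [← Summable.tsum_add (S1 x) (St2 x)]
    exact tsum_congr (fun y => by ring)
  have hsplit : (∑' x, ∑' y, b x y * (u x - u y) * (v x ^ 2 * u x - v y ^ 2 * u y))
      = T + E := by
    rw [tsum_congr hsplit_inner, Summable.tsum_add O1 O2, ← hT, ← hE]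
  rw [hsplit] at eq1
  -- bounds on the potential and eigenvalue terms
  have hCabs : |∑' x, u x * (v x ^ 2 * u x) * m x| ≤ N := by
    rw [tsum_eq_sum (s := F) (fun x hx => by rw [hvF x hx]; ring), hN_eq]
    refine le_trans (Finset.abs_sum_le_sum_abs _ _) (Finset.sum_le_sum (fun x _ => ?_))
    have h1 : u x * (v x ^ 2 * u x) * m x = u x ^ 2 * (v x ^ 2 * m x) := by ring
    rw [h1, abs_of_nonneg (mul_nonneg (sq_nonneg _) (mul_nonneg (sq_nonneg _) (hm x).le))]
    nlinarith [hu2 x, mul_nonneg (sq_nonneg (v x)) (hm x).le]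
  have hBabs : |∑' x, W x * u x * (v x ^ 2 * u x) * m x| ≤ M * N := by
    rw [tsum_eq_sum (s := F) (fun x hx => by rw [hvF x hx]; ring), hN_eq, Finset.mul_sum]
    refine le_trans (Finset.abs_sum_le_sum_abs _ _) (Finset.sum_le_sum (fun x _ => ?_))
    have h1 : W x * u x * (v x ^ 2 * u x) * m x = W x * (u x ^ 2 * (v x ^ 2 * m x)) := by ring
    have h2 : 0 ≤ u x ^ 2 * (v x ^ 2 * m x) :=
      mul_nonneg (sq_nonneg _) (mul_nonneg (sq_nonneg _) (hm x).le)
    rw [h1, abs_mul, abs_of_nonneg h2]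
    calc |W x| * (u x ^ 2 * (v x ^ 2 * m x)) ≤ M * (u x ^ 2 * (v x ^ 2 * m x)) :=
          mul_le_mul_of_nonneg_right (hW x) h2
      _ ≤ M * (v x ^ 2 * m x) := by
          refine mul_le_mul_of_nonneg_left ?_ hM0
          nlinarith [hu2 x, mul_nonneg (sq_nonneg (v x)) (hm x).le]
  -- bound |E| by the absolute double sum
  set E' : ℝ := ∑' x, ∑' y, |b x y * u y * (u x - u y) * (v x ^ 2 - v y ^ 2)| with hE'
  have hEabs : |E| ≤ E' := by
    rw [hE, hE']
    have step1 : |∑' x, ∑' y, b x y * u y * (u x - u y) * (v x ^ 2 - v y ^ 2)|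
        ≤ ∑' x, |∑' y, b x y * u y * (u x - u y) * (v x ^ 2 - v y ^ 2)| := by
      have h := norm_tsum_le_tsum_norm
        (f := fun x => ∑' y, b x y * u y * (u x - u y) * (v x ^ 2 - v y ^ 2))
        (by simp only [Real.norm_eq_abs]; exact O2.abs)
      simp only [Real.norm_eq_abs] at h
      exact h
    refine le_trans step1 (Summable.tsum_le_tsum (fun x => ?_) O2.abs O2abs)
    have h := norm_tsum_le_tsum_norm
      (f := fun y => b x y * u y * (u x - u y) * (v x ^ 2 - v y ^ 2))
      (by simp only [Real.norm_eq_abs]; exact St2abs x)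
    simp only [Real.norm_eq_abs] at h
    exact h
  -- pointwise AM-GM bound
  have hpoint : ∀ x y, |b x y * u y * (u x - u y) * (v x ^ 2 - v y ^ 2)|
      ≤ δ * (v x ^ 2 * b x y * (u x - u y) ^ 2)
        + (δ * (v y ^ 2 * b x y * (u x - u y) ^ 2) + s * (b x y * (v x - v y) ^ 2)) := by
    intro x y
    have h1 : |b x y * u y * (u x - u y) * (v x ^ 2 - v y ^ 2)|
        = b x y * (|u y| * |(u x - u y) * (v x ^ 2 - v y ^ 2)|) := by
      rw [show b x y * u y * (u x - u y) * (v x ^ 2 - v y ^ 2)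
          = b x y * (u y * ((u x - u y) * (v x ^ 2 - v y ^ 2))) from by ring,
        abs_mul, abs_mul, abs_of_nonneg (hb_nonneg x y)]
    have h2 := amgm δ s (u x - u y) (v x) (v y) hδ0 hs0 hδs
    have h3 : |u y| * |(u x - u y) * (v x ^ 2 - v y ^ 2)|
        ≤ |(u x - u y) * (v x ^ 2 - v y ^ 2)| :=
      mul_le_of_le_one_left (abs_nonneg _) (hub y)
    calc |b x y * u y * (u x - u y) * (v x ^ 2 - v y ^ 2)|
        ≤ b x y * (δ * ((u x - u y) ^ 2 * v x ^ 2) + δ * ((u x - u y) ^ 2 * v y ^ 2)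
            + s * (v x - v y) ^ 2) := by
          rw [h1]
          exact mul_le_mul_of_nonneg_left (le_trans h3 h2) (hb_nonneg x y)
      _ = δ * (v x ^ 2 * b x y * (u x - u y) ^ 2)
          + (δ * (v y ^ 2 * b x y * (u x - u y) ^ 2) + s * (b x y * (v x - v y) ^ 2)) := by
          ring
  -- splitting the RHS double sum
  have hinner_rhs : ∀ x,
      (∑' y, (δ * (v x ^ 2 * b x y * (u x - u y) ^ 2)
        + (δ * (v y ^ 2 * b x y * (u x - u y) ^ 2) + s * (b x y * (v x - v y) ^ 2))))
      = δ * (∑' y, v x ^ 2 * b x y * (u x - u y) ^ 2)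
        + (δ * (∑' y, v y ^ 2 * b x y * (u x - u y) ^ 2)
          + s * (∑' y, b x y * (v x - v y) ^ 2)) := by
    intro x
    rw [Summable.tsum_add ((S1 x).mul_left δ) (((Sh2 x).mul_left δ).add ((Sq x).mul_left s)),
      Summable.tsum_add ((Sh2 x).mul_left δ) ((Sq x).mul_left s),
      tsum_mul_left, tsum_mul_left, tsum_mul_left]
  have hE'le : E' ≤ δ * T + (δ * (∑' x, ∑' y, v y ^ 2 * b x y * (u x - u y) ^ 2) + s * Q) := by
    rw [hE']
    calc (∑' x, ∑' y, |b x y * u y * (u x - u y) * (v x ^ 2 - v y ^ 2)|)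
        ≤ ∑' x, ∑' y, (δ * (v x ^ 2 * b x y * (u x - u y) ^ 2)
            + (δ * (v y ^ 2 * b x y * (u x - u y) ^ 2) + s * (b x y * (v x - v y) ^ 2))) := by
          refine Summable.tsum_le_tsum (fun x => ?_) O2abs
            (((O1.mul_left δ).add ((Oh2.mul_left δ).add (Oq.mul_left s))).congr
              (fun x => (hinner_rhs x).symm))
          exact Summable.tsum_le_tsum (fun y => hpoint x y) (St2abs x)
            (((S1 x).mul_left δ).add (((Sh2 x).mul_left δ).add ((Sq x).mul_left s)))
      _ = δ * T + (δ * (∑' x, ∑' y, v y ^ 2 * b x y * (u x - u y) ^ 2) + s * Q) := by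
          rw [tsum_congr hinner_rhs,
            Summable.tsum_add (O1.mul_left δ) ((Oh2.mul_left δ).add (Oq.mul_left s)),
            Summable.tsum_add (Oh2.mul_left δ) (Oq.mul_left s),
            tsum_mul_left, tsum_mul_left, tsum_mul_left, ← hT, ← hQdef]
  -- symmetry: the swapped double sum equals T
  have hT2 : (∑' x, ∑' y, v y ^ 2 * b x y * (u x - u y) ^ 2) = T := by
    have hsum_unc : Summable (Function.uncurry
        (fun x y => v y ^ 2 * b x y * (u x - u y) ^ 2)) := by
      refine (summable_prod_of_nonneg (fun p => ?_)).mpr ⟨fun x => Sh2 x, Oh2⟩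
      have : (0:ℝ) ≤ v p.2 ^ 2 * b p.1 p.2 * (u p.1 - u p.2) ^ 2 :=
        mul_nonneg (mul_nonneg (sq_nonneg _) (hb_nonneg _ _)) (sq_nonneg _)
      exact this
    rw [tsum_swap hsum_unc, hT]
    exact tsum_congr (fun c => tsum_congr (fun d => by rw [hb_symm d c]; ring))
  clear_value a s δ F Vsq G T Q N BW E E'
  -- combine everything
  have hmain : T ≤ a * N + (δ * T + (δ * T + s * Q)) := by
    have h1 : lam * (∑' x, u x * (v x ^ 2 * u x) * m x) ≤ |lam| * N := by
      refine le_trans (le_abs_self _) ?_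
      rw [abs_mul]
      exact mul_le_mul_of_nonneg_left hCabs (abs_nonneg lam)
    have h2 : -(∑' x, W x * u x * (v x ^ 2 * u x) * m x) ≤ M * N :=
      le_trans (neg_le_abs _) hBabs
    have h3 : -E ≤ E' := le_trans (neg_le_abs _) hEabs
    have h4 := hE'le
    rw [hT2] at h4
    have ha' : a * N = |lam| * N + M * N := by rw [ha]; ring
    linarith only [h1, h2, h3, h4, ha', eq1]
  exact caccio_final_algebra T a N s δ Q hT0 ha0 hN0 hN1 hQ0 hQ1 hs2 hsq hδs hmain
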